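/- Left pseudo-Ore condition (Lemma 2.4 of Beachy 1993): if (a,C₁,x^t) ≥ (b,C₂,y^t), i.e., there exist m×n matrices A₁,A₂ over R with a = bA₁, y^t = A₂x^t, and C₂A₁ = A₂C₁, then the equivalence classes agree: [a:C₁:x^t] = [b:C₂:y^t] in Σ⁻¹X, i.e., (a,C₁,x^t) ∼ (b,C₂,y^t). -/

import Mathlib

open Matrix

variable {R X : Type*}

/-- Action of a matrix over `R` on a column of module elements. -/
def mulVecX [Ring R] [AddCommGroup X] [Module R X] {m n : ℕ}
    (A : Matrix (Fin m) (Fin n) R) (x : Fin n → X) : Fin m → X :=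
  fun i => ∑ j, A i j • x j

/-- An ordered triple `(a, C, xᵗ)` with `a ∈ Rⁿ`, `C` an `n × n` matrix, `x ∈ Xⁿ`. -/
structure Triple (R X : Type*) [Ring R] [AddCommGroup X] [Module R X] where
  n : ℕ
  a : Fin n → R
  C : Matrix (Fin n) (Fin n) R
  x : Fin n → X

namespace Triple

variable [Ring R] [AddCommGroup X] [Module R X]

/-- Block sum of ordered triples: `([a b], diag(C,D), [xᵗ; yᵗ])`. -/
def add (t s : Triple R X) : Triple R X where
  n := t.n + s.n
  a := Fin.append t.a s.a
  C := (Matrix.fromBlocks t.C 0 0 s.C).submatrix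
        (finSumFinEquiv (m := t.n) (n := s.n)).symm finSumFinEquiv.symm
  x := Fin.append t.x s.x

/-- The congruence relation `≡`: same size, witnessed by invertible matrices `U₁, U₂`
with `a = b U₁`, `yᵗ = U₂ xᵗ` and `C₂ U₁ = U₂ C₁`. -/
def Cong (t s : Triple R X) : Prop :=
  ∃ (h : t.n = s.n) (U₁ U₂ : Matrix (Fin t.n) (Fin t.n) R),
    IsUnit U₁ ∧ IsUnit U₂ ∧
    t.a = (fun j => s.a (Fin.cast h j)) ᵥ* U₁ ∧
    (fun i => s.x (Fin.cast h i)) = mulVecX U₂ t.x ∧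
    s.C.submatrix (Fin.cast h) (Fin.cast h) * U₁ = U₂ * t.C

/-- The relation `(a,C₁,xᵗ) ≥ (b,C₂,yᵗ)`: there are matrices `A₁, A₂` with
`a = b A₁`, `yᵗ = A₂ xᵗ` and `C₂ A₁ = A₂ C₁`. -/
def Ge (t s : Triple R X) : Prop :=
  ∃ A₁ A₂ : Matrix (Fin s.n) (Fin t.n) R,
    t.a = s.a ᵥ* A₁ ∧ s.x = mulVecX A₂ t.x ∧ s.C * A₁ = A₂ * t.C

/-- The relation `(a,C₁,xᵗ) ≤ (b,C₂,yᵗ)`: there are matrices `A₁, A₂` with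
`xᵗ = A₁ yᵗ`, `b = a A₂` and `C₁ A₂ = A₁ C₂`. -/
def Le (t s : Triple R X) : Prop :=
  ∃ A₁ A₂ : Matrix (Fin t.n) (Fin s.n) R,
    t.x = mulVecX A₁ s.x ∧ s.a = t.a ᵥ* A₂ ∧ t.C * A₂ = A₁ * s.C

end Triple

/-- A size-indexed collection of square matrices over `R`. -/
def MatSet (R : Type*) [Ring R] := ∀ n : ℕ, Set (Matrix (Fin n) (Fin n) R)

/-- `S` is a multiplicative set of matrices: it contains all permutation matrices,
is closed under products, and closed under block upper triangular combinations. -/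
def IsMatMultSet [Ring R] (S : MatSet R) : Prop :=
  (∀ (n : ℕ) (σ : Equiv.Perm (Fin n)), σ.permMatrix R ∈ S n) ∧
  (∀ (n : ℕ) (C D : Matrix (Fin n) (Fin n) R), C ∈ S n → D ∈ S n → C * D ∈ S n) ∧
  (∀ (n m : ℕ) (C : Matrix (Fin n) (Fin n) R) (D : Matrix (Fin m) (Fin m) R)
      (A : Matrix (Fin n) (Fin m) R), C ∈ S n → D ∈ S m →
    (Matrix.fromBlocks C A 0 D).submatrix finSumFinEquiv.symm finSumFinEquiv.symm ∈ S (n + m))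

/-- The trivial triples `Σ⁻¹X₀`: finite sums of triples `(0,C,xᵗ)` and `(b,D,0ᵗ)` with
`C, D ∈ Σ`. -/
inductive IsTrivial [Ring R] [AddCommGroup X] [Module R X] (S : MatSet R) :
    Triple R X → Prop
  | zeroA (n : ℕ) (C : Matrix (Fin n) (Fin n) R) (x : Fin n → X) (hC : C ∈ S n) :
      IsTrivial S ⟨n, 0, C, x⟩
  | zeroX (n : ℕ) (b : Fin n → R) (C : Matrix (Fin n) (Fin n) R) (hC : C ∈ S n) :
      IsTrivial S ⟨n, b, C, 0⟩
  | add {t s : Triple R X} : IsTrivial S t → IsTrivial S s → IsTrivial S (t.add s)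

/-- The relation `∼`: triples become congruent after adding trivial triples. -/
def Sim [Ring R] [AddCommGroup X] [Module R X] (S : MatSet R) (t s : Triple R X) : Prop :=
  ∃ z₁ z₂ : Triple R X, IsTrivial S z₁ ∧ IsTrivial S z₂ ∧ (t.add z₁).Cong (s.add z₂)

section PseudoOreHelpers

variable [Ring R] [AddCommGroup X] [Module R X]

/-- `mulVecX` generalized to arbitrary (finite) index types. -/
def sMulVecX {α β : Type*} [Fintype β] (A : Matrix α β R) (x : β → X) : α → X :=
  fun i => ∑ j, A i j • x j

lemma sMulVecX_eq {m n : ℕ} (A : Matrix (Fin m) (Fin n) R) (x : Fin n → X) :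
    sMulVecX A x = mulVecX A x := rfl

lemma append_elim {α : Type*} {m n : ℕ} (p : Fin m → α) (q : Fin n → α) :
    Fin.append p q = Sum.elim p q ∘ ⇑(finSumFinEquiv (m := m) (n := n)).symm := by
  funext i
  obtain ⟨j, rfl⟩ := finSumFinEquiv.surjective i
  cases j <;> simp

lemma mulVecX_submatrix {k l : ℕ} {α β : Type*} [Fintype β] (A : Matrix α β R)
    (e₁ : Fin k → α) (e₂ : Fin l ≃ β) (v : Fin l → X) :
    mulVecX (A.submatrix e₁ ⇑e₂) v = (sMulVecX A (v ∘ ⇑e₂.symm)) ∘ e₁ := by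
  funext i
  simp only [mulVecX, sMulVecX, Function.comp, Matrix.submatrix_apply]
  exact Fintype.sum_equiv e₂ _ _ (fun j => by simp)

lemma sMulVecX_one {α : Type*} [Fintype α] [DecidableEq α] (x : α → X) :
    sMulVecX (1 : Matrix α α R) x = x := by
  funext i
  simp [sMulVecX, Matrix.one_apply, ite_smul]

lemma sMulVecX_zero_right {α β : Type*} [Fintype β] (A : Matrix α β R) :
    sMulVecX A (0 : β → X) = 0 := by
  funext i; simp [sMulVecX]

lemma sMulVecX_zero_left {α β : Type*} [Fintype β] (x : β → X) :
    sMulVecX (0 : Matrix α β R) x = 0 := by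
  funext i; simp [sMulVecX]

lemma sMulVecX_fromBlocks {α₁ α₂ β₁ β₂ : Type*} [Fintype β₁] [Fintype β₂]
    (A : Matrix α₁ β₁ R) (B : Matrix α₁ β₂ R) (C : Matrix α₂ β₁ R) (D : Matrix α₂ β₂ R)
    (x : β₁ → X) (y : β₂ → X) :
    sMulVecX (Matrix.fromBlocks A B C D) (Sum.elim x y) =
      Sum.elim (fun i => sMulVecX A x i + sMulVecX B y i)
        (fun i => sMulVecX C x i + sMulVecX D y i) := by
  funext i
  cases i <;> simp [sMulVecX, Fintype.sum_sum_type]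

lemma aux_isUnit {n m : ℕ} (A : Matrix (Fin m) (Fin n) R)
    (e : Fin (n + m) ≃ Fin n ⊕ Fin m) (E : Fin (n + m) ≃ Fin m ⊕ Fin n) :
    IsUnit ((Matrix.fromBlocks A 1 1 0).submatrix ⇑E ⇑e) := by
  refine isUnit_iff_exists.mpr ⟨(Matrix.fromBlocks 0 1 1 (-A)).submatrix ⇑e ⇑E, ?_, ?_⟩
  · rw [Matrix.submatrix_mul_equiv]
    simp [Matrix.fromBlocks_multiply, Matrix.fromBlocks_one, Matrix.submatrix_one_equiv]
  · rw [Matrix.submatrix_mul_equiv]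
    simp [Matrix.fromBlocks_multiply, Matrix.fromBlocks_one, Matrix.submatrix_one_equiv]

end PseudoOreHelpers

/-- Left pseudo-Ore condition: if `(a,C₁,xᵗ) ≥ (b,C₂,yᵗ)` then `(a,C₁,xᵗ) ∼ (b,C₂,yᵗ)`. -/
theorem ge_imp_sim [Ring R] [AddCommGroup X] [Module R X] (S : MatSet R)
    (hS : IsMatMultSet S) (t s : Triple R X) (ht : t.C ∈ S t.n) (hs : s.C ∈ S s.n)
    (h : t.Ge s) : Sim S t s := by
  obtain ⟨A₁, A₂, ha, hx, hC⟩ := h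
  have h' : t.n + s.n = s.n + t.n := Nat.add_comm _ _
  refine ⟨⟨s.n, s.a, s.C, 0⟩, ⟨t.n, 0, t.C, t.x⟩,
    IsTrivial.zeroX s.n s.a s.C hs, IsTrivial.zeroA t.n t.C t.x ht,
    h',
    (Matrix.fromBlocks A₁ 1 1 0).submatrix
      ⇑((finCongr h').trans (finSumFinEquiv (m := s.n) (n := t.n)).symm)
      ⇑(finSumFinEquiv (m := t.n) (n := s.n)).symm,
    (Matrix.fromBlocks A₂ 1 1 0).submatrix
      ⇑((finCongr h').trans (finSumFinEquiv (m := s.n) (n := t.n)).symm)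
      ⇑(finSumFinEquiv (m := t.n) (n := s.n)).symm,
    aux_isUnit A₁ _ _, aux_isUnit A₂ _ _, ?_, ?_, ?_⟩
  · -- row vector condition
    show Fin.append t.a s.a =
      (fun j => Fin.append s.a (0 : Fin t.n → R) (Fin.cast h' j)) ᵥ*
        (Matrix.fromBlocks A₁ 1 1 0).submatrix
          ⇑((finCongr h').trans (finSumFinEquiv (m := s.n) (n := t.n)).symm)
          ⇑(finSumFinEquiv (m := t.n) (n := s.n)).symm
    have h1 : (fun j => Fin.append s.a (0 : Fin t.n → R) (Fin.cast h' j)) =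
        Sum.elim s.a 0 ∘ ⇑((finCongr h').trans (finSumFinEquiv (m := s.n) (n := t.n)).symm) := by
      funext j
      rw [append_elim]
      rfl
    rw [h1, Matrix.submatrix_vecMul_equiv]
    have h2 : (Sum.elim s.a (0 : Fin t.n → R) ∘
          ⇑((finCongr h').trans (finSumFinEquiv (m := s.n) (n := t.n)).symm)) ∘
          ⇑((finCongr h').trans (finSumFinEquiv (m := s.n) (n := t.n)).symm).symm =
        Sum.elim s.a 0 := by
      funext i; simp
    rw [h2, Matrix.vecMul_fromBlocks]
    simp [ha, append_elim]
  · -- module column condition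
    show (fun i => Fin.append s.x t.x (Fin.cast h' i)) =
      mulVecX ((Matrix.fromBlocks A₂ 1 1 0).submatrix
          ⇑((finCongr h').trans (finSumFinEquiv (m := s.n) (n := t.n)).symm)
          ⇑(finSumFinEquiv (m := t.n) (n := s.n)).symm)
        (Fin.append t.x (0 : Fin s.n → X))
    have h1 : (fun i => Fin.append s.x t.x (Fin.cast h' i)) =
        Sum.elim s.x t.x ∘ ⇑((finCongr h').trans (finSumFinEquiv (m := s.n) (n := t.n)).symm) := by
      funext i
      rw [append_elim]
      rfl
    rw [h1, append_elim, mulVecX_submatrix]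
    have h3 : (Sum.elim t.x (0 : Fin s.n → X) ∘ ⇑(finSumFinEquiv (m := t.n) (n := s.n)).symm) ∘
        ⇑(finSumFinEquiv (m := t.n) (n := s.n)).symm.symm = Sum.elim t.x 0 := by
      funext i; simp
    rw [h3, sMulVecX_fromBlocks]
    funext i
    rcases hi : ((finCongr h').trans (finSumFinEquiv (m := s.n) (n := t.n)).symm) i with j | j <;>
      simp [Function.comp, hi, hx, ← sMulVecX_eq, sMulVecX_one, sMulVecX_zero_right,
        sMulVecX_zero_left]
  · -- matrix condition
    show ((Matrix.fromBlocks s.C 0 0 t.C).submatrix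
          ⇑(finSumFinEquiv (m := s.n) (n := t.n)).symm
          ⇑(finSumFinEquiv (m := s.n) (n := t.n)).symm).submatrix
          (Fin.cast h') (Fin.cast h') *
        (Matrix.fromBlocks A₁ 1 1 0).submatrix
          ⇑((finCongr h').trans (finSumFinEquiv (m := s.n) (n := t.n)).symm)
          ⇑(finSumFinEquiv (m := t.n) (n := s.n)).symm =
      (Matrix.fromBlocks A₂ 1 1 0).submatrix
          ⇑((finCongr h').trans (finSumFinEquiv (m := s.n) (n := t.n)).symm)
          ⇑(finSumFinEquiv (m := t.n) (n := s.n)).symm *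
        (Matrix.fromBlocks t.C 0 0 s.C).submatrix
          ⇑(finSumFinEquiv (m := t.n) (n := s.n)).symm
          ⇑(finSumFinEquiv (m := t.n) (n := s.n)).symm
    rw [Matrix.submatrix_submatrix]
    have hcomp : ⇑(finSumFinEquiv (m := s.n) (n := t.n)).symm ∘ Fin.cast h' =
        ⇑((finCongr h').trans (finSumFinEquiv (m := s.n) (n := t.n)).symm) := rfl
    rw [hcomp]
    simp only [Matrix.submatrix_mul_equiv]
    congr 1
    simp [Matrix.fromBlocks_multiply, hC]
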